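/- Let n ≥ 1 and let F: [0,1]ⁿ → ℝ be a continuously differentiable function that is non-negative, m-monotone (m·F(x) ≤ F(y) whenever 0 ≤ x ≤ y ≤ 1 coordinate-wise), DR-submodular (∇F(x) ≥ ∇F(y) coordinate-wise whenever x ≤ y), and L-smooth (‖∇F(x) − ∇F(y)‖₂ ≤ L‖x − y‖₂ for all x, y ∈ [0,1]ⁿ). Let P ⊆ [0,1]ⁿ be a nonempty convex down-closed set, let D ≥ 0 satisfy ‖x‖₂ ≤ D for all x ∈ P, and let ε = 1/K for an integer K ≥ 1. Consider the Non-monotone Frank-Wolfe iterates y⁽⁰⁾ = 0 and, for i = 0, 1, …, K − 1, y⁽ⁱ⁺¹⁾ = y⁽ⁱ⁾ + ε·(1 − y⁽ⁱ⁾) ⊙ s⁽ⁱ⁾, where s⁽ⁱ⁾ ∈ P maximizes x ↦ x · ((1 − y⁽ⁱ⁾) ⊙ ∇F(y⁽ⁱ⁾)) over P. Then for every o ∈ P, F(y⁽ᴷ⁾) ≥ [m·(1 − 1/e) + (1 − m)·(1/e)]·F(o) − ε·L·D². -/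

import Mathlib

private lemma stmt19_deriv (n : ℕ) (F : (Fin n → ℝ) → ℝ) (gF : (Fin n → ℝ) → Fin n → ℝ)
    (hdiff : ∀ x : Fin n → ℝ, (∀ i, 0 ≤ x i ∧ x i ≤ 1) →
      HasFDerivAt F
        (LinearMap.toContinuousLinearMap
          (∑ i : Fin n, gF x i • (LinearMap.proj i : (Fin n → ℝ) →ₗ[ℝ] ℝ))) x)
    (c u : Fin n → ℝ) (r : ℝ)
    (hbox : ∀ i, 0 ≤ c i + r * u i ∧ c i + r * u i ≤ 1) :
    HasDerivAt (fun t => F (fun j => c j + t * u j))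
      (∑ i, gF (fun j => c j + r * u j) i * u i) r := by
  have h1 := hdiff _ hbox
  have h2 : HasDerivAt (fun t : ℝ => (fun j => c j + t * u j : Fin n → ℝ)) u r := by
    have := ((hasDerivAt_id r).smul_const u).const_add c
    rw [one_smul] at this
    exact this
  have h3 := h1.comp_hasDerivAt r h2
  refine HasDerivAt.congr_deriv h3 ?_
  simp [LinearMap.coe_toContinuousLinearMap', LinearMap.sum_apply, LinearMap.smul_apply,
    LinearMap.proj_apply, smul_eq_mul]

private lemma stmt19_mvt (n : ℕ) (F : (Fin n → ℝ) → ℝ) (gF : (Fin n → ℝ) → Fin n → ℝ)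
    (hdiff : ∀ x : Fin n → ℝ, (∀ i, 0 ≤ x i ∧ x i ≤ 1) →
      HasFDerivAt F
        (LinearMap.toContinuousLinearMap
          (∑ i : Fin n, gF x i • (LinearMap.proj i : (Fin n → ℝ) →ₗ[ℝ] ℝ))) x)
    (c u : Fin n → ℝ) (a b : ℝ) (hab : a < b)
    (hbox : ∀ r ∈ Set.Icc a b, ∀ i, 0 ≤ c i + r * u i ∧ c i + r * u i ≤ 1) :
    ∃ ξ ∈ Set.Ioo a b,
      F (fun j => c j + b * u j) - F (fun j => c j + a * u j)
        = (b - a) * ∑ i, gF (fun j => c j + ξ * u j) i * u i := by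
  obtain ⟨ξ, hξ, heq⟩ := exists_hasDerivAt_eq_slope (fun t => F (fun j => c j + t * u j))
    (fun t => ∑ i, gF (fun j => c j + t * u j) i * u i) hab
    (fun r hr => (stmt19_deriv n F gF hdiff c u r (hbox r hr)).continuousAt.continuousWithinAt)
    (fun r hr => stmt19_deriv n F gF hdiff c u r (hbox r (Set.mem_Icc_of_Ioo hr)))
  refine ⟨ξ, hξ, ?_⟩
  have hba : b - a ≠ 0 := by linarith
  field_simp at heq
  linarith [heq]

private lemma stmt19_cs (n : ℕ) (f g : Fin n → ℝ) :
    (∑ j, f j * g j) ≤ Real.sqrt (∑ j, f j ^ 2) * Real.sqrt (∑ j, g j ^ 2) := by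
  have h1 := Finset.sum_mul_sq_le_sq_mul_sq Finset.univ f g
  calc ∑ j, f j * g j ≤ Real.sqrt ((∑ j, f j * g j) ^ 2) := by
        rw [Real.sqrt_sq_eq_abs]; exact le_abs_self _
    _ ≤ Real.sqrt ((∑ j, f j ^ 2) * ∑ j, g j ^ 2) := Real.sqrt_le_sqrt h1
    _ = _ := Real.sqrt_mul (by positivity) _

set_option maxHeartbeats 2000000 in
/-- guarantee of the Non-monotone Frank-Wolfe algorithm.  `F` is continuously
differentiable on `[0,1]ⁿ` with gradient `gF` (encoded via `HasFDerivAt` with the linear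
functional `x ↦ Σᵢ gF x i · xᵢ`), non-negative, `m`-monotone, DR-submodular (antitone
gradient) and `L`-smooth (in the Euclidean norm).  `P` is a nonempty convex down-closed
subset of `[0,1]ⁿ` of Euclidean diameter at most `D`.  The iterates satisfy `y⁰ = 0` and
`y^{i+1} = yⁱ + ε·(1 − yⁱ) ⊙ sⁱ`, where `sⁱ ∈ P` maximizes `x ↦ x · ((1 − yⁱ) ⊙ ∇F(yⁱ))`
over `P`.  Then for every `o ∈ P`,
`F(y^K) ≥ [m(1 − 1/e) + (1 − m)/e]·F(o) − εLD²`. -/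
theorem stmt19 (n : ℕ) (hn : 1 ≤ n)
    (F : (Fin n → ℝ) → ℝ) (gF : (Fin n → ℝ) → Fin n → ℝ)
    (hdiff : ∀ x : Fin n → ℝ, (∀ i, 0 ≤ x i ∧ x i ≤ 1) →
      HasFDerivAt F
        (LinearMap.toContinuousLinearMap
          (∑ i : Fin n, gF x i • (LinearMap.proj i : (Fin n → ℝ) →ₗ[ℝ] ℝ))) x)
    (m : ℝ) (hm : m ∈ Set.Icc (0 : ℝ) 1)
    (hnn : ∀ x : Fin n → ℝ, (∀ i, 0 ≤ x i ∧ x i ≤ 1) → 0 ≤ F x)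
    (hmono : ∀ x y : Fin n → ℝ, (∀ i, 0 ≤ x i) → (∀ i, x i ≤ y i) → (∀ i, y i ≤ 1) →
      m * F x ≤ F y)
    (hDR : ∀ x y : Fin n → ℝ, (∀ i, 0 ≤ x i ∧ x i ≤ 1) → (∀ i, 0 ≤ y i ∧ y i ≤ 1) →
      (∀ i, x i ≤ y i) → ∀ i, gF y i ≤ gF x i)
    (L : ℝ) (hL : 0 ≤ L)
    (hsmooth : ∀ x y : Fin n → ℝ, (∀ i, 0 ≤ x i ∧ x i ≤ 1) → (∀ i, 0 ≤ y i ∧ y i ≤ 1) →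
      Real.sqrt (∑ i, (gF x i - gF y i) ^ 2) ≤ L * Real.sqrt (∑ i, (x i - y i) ^ 2))
    (P : Set (Fin n → ℝ)) (hPne : P.Nonempty) (hPconv : Convex ℝ P)
    (hPbox : ∀ p ∈ P, ∀ i, 0 ≤ p i ∧ p i ≤ 1)
    (hPdown : ∀ p ∈ P, ∀ q : Fin n → ℝ, (∀ i, 0 ≤ q i) → (∀ i, q i ≤ p i) → q ∈ P)
    (D : ℝ) (hD : 0 ≤ D) (hDbound : ∀ p ∈ P, Real.sqrt (∑ i, (p i) ^ 2) ≤ D)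
    (K : ℕ) (hK : 1 ≤ K) (ε : ℝ) (hε : ε = 1 / (K : ℝ))
    (y s : ℕ → Fin n → ℝ)
    (hy0 : y 0 = fun _ => 0)
    (hstep : ∀ i < K, s i ∈ P ∧
      (∀ p ∈ P, (∑ j, p j * ((1 - y i j) * gF (y i) j))
        ≤ ∑ j, s i j * ((1 - y i j) * gF (y i) j)) ∧
      y (i + 1) = fun j => y i j + ε * ((1 - y i j) * s i j))
    (o : Fin n → ℝ) (ho : o ∈ P) :
    (m * (1 - 1 / Real.exp 1) + (1 - m) * (1 / Real.exp 1)) * F o - ε * L * D ^ 2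
      ≤ F (y K) := by
  obtain ⟨hm0, hm1⟩ := hm
  have hK0 : (0:ℝ) < K := by exact_mod_cast hK
  have hε0 : 0 < ε := by rw [hε]; positivity
  have hε1 : ε ≤ 1 := by rw [hε, div_le_one hK0]; exact_mod_cast hK
  have hεK : ε * K = 1 := by rw [hε]; field_simp
  have hq0 : (0:ℝ) ≤ 1 - ε := by linarith
  have hoBox := hPbox o ho
  have hFo0 : 0 ≤ F o := hnn o hoBox
  -- invariant
  have hinv : ∀ i, i ≤ K → ∀ j, 0 ≤ y i j ∧ y i j ≤ 1 - (1 - ε) ^ i := by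
    intro i
    induction i with
    | zero => intro _ j; rw [hy0]; norm_num
    | succ i ih =>
      intro hi1 j
      have hi : i < K := by omega
      have ih' := ih (by omega)
      obtain ⟨hsP, -, hyeq⟩ := hstep i hi
      obtain ⟨hs0, hs1⟩ := hPbox _ hsP j
      obtain ⟨hy0j, hy1j⟩ := ih' j
      have hqi : (0:ℝ) ≤ (1 - ε) ^ i := by positivity
      have h1y : (1 - ε) ^ i ≤ 1 - y i j := by linarith
      rw [hyeq]
      constructor
      · have h : 0 ≤ ε * ((1 - y i j) * s i j) :=
          mul_nonneg hε0.le (mul_nonneg (by linarith) hs0)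
        show (0:ℝ) ≤ y i j + ε * ((1 - y i j) * s i j)
        linarith
      · show y i j + ε * ((1 - y i j) * s i j) ≤ 1 - (1 - ε) ^ (i + 1)
        have h1 : ε * ((1 - y i j) * s i j) ≤ ε * (1 - y i j) :=
          mul_le_mul_of_nonneg_left (mul_le_of_le_one_right (by linarith) hs1) hε0.le
        have h2 : (1 - ε) * (1 - ε) ^ i ≤ (1 - ε) * (1 - y i j) :=
          mul_le_mul_of_nonneg_left h1y hq0
        have h3 : (1 - ε) ^ (i + 1) = (1 - ε) * (1 - ε) ^ i := by rw [pow_succ]; ring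
        nlinarith
  have hbox : ∀ i, i ≤ K → ∀ j, 0 ≤ y i j ∧ y i j ≤ 1 := by
    intro i hi j
    obtain ⟨h1, h2⟩ := hinv i hi j
    have : (0:ℝ) ≤ (1 - ε) ^ i := by positivity
    exact ⟨h1, by linarith⟩
  -- per-step inequality
  have hstepineq : ∀ i, i < K →
      (1 - ε) * F (y i) + ε * ((m + (1 - m) * (1 - ε) ^ i) * F o) - ε ^ 2 * L * D ^ 2
        ≤ F (y (i + 1)) := by
    intro i hi
    obtain ⟨hsP, hopt, hyeq⟩ := hstep i hi
    have hzbox := hbox i hi.le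
    have hsbox := hPbox _ hsP
    have hobox := hPbox o ho
    have hqi : (0:ℝ) ≤ (1 - ε) ^ i := by positivity
    set d : Fin n → ℝ := fun j => ε * ((1 - y i j) * s i j) with hddef
    have hd0 : ∀ j, 0 ≤ d j := fun j =>
      mul_nonneg hε0.le (mul_nonneg (by linarith [(hzbox j).2]) (hsbox j).1)
    have hdle : ∀ j, y i j + d j ≤ 1 := by
      intro j
      have h1 : d j ≤ ε * (1 - y i j) :=
        mul_le_mul_of_nonneg_left (mul_le_of_le_one_right (by linarith [(hzbox j).2]) (hsbox j).2) hε0.le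
      nlinarith [(hzbox j).2]
    have hboxA : ∀ r ∈ Set.Icc (0:ℝ) 1, ∀ j, 0 ≤ y i j + r * d j ∧ y i j + r * d j ≤ 1 := by
      intro r hr j
      obtain ⟨hr0, hr1⟩ := hr
      have h1 : 0 ≤ r * d j := mul_nonneg hr0 (hd0 j)
      have h2 : r * d j ≤ d j := mul_le_of_le_one_left (hd0 j) hr1
      exact ⟨by linarith [(hzbox j).1], by linarith [hdle j]⟩
    obtain ⟨ξ, hξ, hA⟩ := stmt19_mvt n F gF hdiff (y i) d 0 1 one_pos hboxA
    have e1 : (fun j => y i j + 1 * d j) = y (i + 1) := by rw [hyeq]; funext j; ring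
    have e2 : (fun j => y i j + 0 * d j) = y i := by funext j; ring
    rw [e1, e2] at hA
    set zξ : Fin n → ℝ := fun j => y i j + ξ * d j with hzξdef
    have hzξbox : ∀ j, 0 ≤ zξ j ∧ zξ j ≤ 1 := hboxA ξ ⟨hξ.1.le, hξ.2.le⟩
    -- part 2: smoothness error control
    have hd2 : ∑ j, d j ^ 2 ≤ ε ^ 2 * D ^ 2 := by
      have hsD : ∑ j, s i j ^ 2 ≤ D ^ 2 := by
        have h := hDbound _ hsP
        have h0 : (0:ℝ) ≤ ∑ j, s i j ^ 2 := by positivity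
        calc ∑ j, s i j ^ 2 = Real.sqrt (∑ j, s i j ^ 2) ^ 2 := (Real.sq_sqrt h0).symm
          _ ≤ D ^ 2 := pow_le_pow_left₀ (Real.sqrt_nonneg _) h 2
      calc ∑ j, d j ^ 2 = ε ^ 2 * ∑ j, ((1 - y i j) * s i j) ^ 2 := by
            rw [Finset.mul_sum]; exact Finset.sum_congr rfl fun j _ => by rw [hddef]; ring
        _ ≤ ε ^ 2 * ∑ j, s i j ^ 2 := by
            refine mul_le_mul_of_nonneg_left (Finset.sum_le_sum fun j _ => ?_) (sq_nonneg ε)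
            have h1 : (1 - y i j) ^ 2 ≤ 1 := by nlinarith [(hzbox j).1, (hzbox j).2]
            calc ((1 - y i j) * s i j) ^ 2 = (1 - y i j) ^ 2 * s i j ^ 2 := by ring
              _ ≤ 1 * s i j ^ 2 := mul_le_mul_of_nonneg_right h1 (sq_nonneg _)
              _ = s i j ^ 2 := one_mul _
        _ ≤ ε ^ 2 * D ^ 2 := mul_le_mul_of_nonneg_left hsD (sq_nonneg ε)
    have hd2' : (0:ℝ) ≤ ∑ j, d j ^ 2 := by positivity
    have hErr : -(L * (∑ j, d j ^ 2)) ≤ ∑ j, (gF zξ j - gF (y i) j) * d j := by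
      have hcs := stmt19_cs n (fun j => gF (y i) j - gF zξ j) d
      have hneg : ∑ j, (gF (y i) j - gF zξ j) * d j
          = -∑ j, (gF zξ j - gF (y i) j) * d j := by
        rw [← Finset.sum_neg_distrib]; exact Finset.sum_congr rfl fun j _ => by ring
      have hsq : ∑ j, (gF (y i) j - gF zξ j) ^ 2 = ∑ j, (gF zξ j - gF (y i) j) ^ 2 :=
        Finset.sum_congr rfl fun j _ => by ring
      rw [hneg, hsq] at hcs
      have hsm := hsmooth zξ (y i) hzξbox hzbox
      have hdist : Real.sqrt (∑ j, (zξ j - y i j) ^ 2) = ξ * Real.sqrt (∑ j, d j ^ 2) := by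
        have : ∑ j, (zξ j - y i j) ^ 2 = ξ ^ 2 * ∑ j, d j ^ 2 := by
          rw [Finset.mul_sum]; exact Finset.sum_congr rfl fun j _ => by rw [hzξdef]; ring
        rw [this, Real.sqrt_mul (sq_nonneg ξ), Real.sqrt_sq hξ.1.le]
      rw [hdist] at hsm
      have hsq0 : (0:ℝ) ≤ Real.sqrt (∑ j, d j ^ 2) := Real.sqrt_nonneg _
      have h3 : Real.sqrt (∑ j, (gF zξ j - gF (y i) j) ^ 2) * Real.sqrt (∑ j, d j ^ 2)
          ≤ (L * (ξ * Real.sqrt (∑ j, d j ^ 2))) * Real.sqrt (∑ j, d j ^ 2) :=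
        mul_le_mul_of_nonneg_right hsm hsq0
      have hRR : Real.sqrt (∑ j, d j ^ 2) * Real.sqrt (∑ j, d j ^ 2) = ∑ j, d j ^ 2 :=
        Real.mul_self_sqrt hd2'
      have h4 : (L * (ξ * Real.sqrt (∑ j, d j ^ 2))) * Real.sqrt (∑ j, d j ^ 2)
          = L * ξ * (Real.sqrt (∑ j, d j ^ 2) * Real.sqrt (∑ j, d j ^ 2)) := by ring
      rw [h4, hRR] at h3
      have h5 : L * ξ * (∑ j, d j ^ 2) ≤ L * (∑ j, d j ^ 2) :=
        mul_le_mul_of_nonneg_right (mul_le_of_le_one_right hL hξ.2.le) hd2'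
      linarith
    -- part 4: optimality of s i
    have hgd : ε * (∑ j, o j * ((1 - y i j) * gF (y i) j)) - L * (ε ^ 2 * D ^ 2)
        ≤ ∑ j, gF zξ j * d j := by
      have hsplit : ∑ j, gF zξ j * d j
          = ∑ j, gF (y i) j * d j + ∑ j, (gF zξ j - gF (y i) j) * d j := by
        rw [← Finset.sum_add_distrib]; exact Finset.sum_congr rfl fun j _ => by ring
      have hgd1 : ∑ j, gF (y i) j * d j = ε * ∑ j, s i j * ((1 - y i j) * gF (y i) j) := by
        rw [Finset.mul_sum]; exact Finset.sum_congr rfl fun j _ => by rw [hddef]; ring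
      have hgd2 : ε * (∑ j, o j * ((1 - y i j) * gF (y i) j))
          ≤ ε * ∑ j, s i j * ((1 - y i j) * gF (y i) j) :=
        mul_le_mul_of_nonneg_left (hopt o ho) hε0.le
      have hL2 : L * (∑ j, d j ^ 2) ≤ L * (ε ^ 2 * D ^ 2) := mul_le_mul_of_nonneg_left hd2 hL
      rw [hsplit, hgd1]
      linarith
    -- part 5: concavity along u
    set u : Fin n → ℝ := fun j => (1 - y i j) * o j with hudef
    have hu0 : ∀ j, 0 ≤ u j := fun j =>
      mul_nonneg (by linarith [(hzbox j).2]) (hobox j).1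
    have hboxB : ∀ r ∈ Set.Icc (0:ℝ) 1, ∀ j, 0 ≤ y i j + r * u j ∧ y i j + r * u j ≤ 1 := by
      intro r hr j
      obtain ⟨hr0, hr1⟩ := hr
      have h1 : 0 ≤ r * u j := mul_nonneg hr0 (hu0 j)
      have h2 : r * u j ≤ u j := mul_le_of_le_one_left (hu0 j) hr1
      have h3 : u j ≤ 1 - y i j :=
        mul_le_of_le_one_right (by linarith [(hzbox j).2]) (hobox j).2
      exact ⟨by linarith [(hzbox j).1], by linarith⟩
    obtain ⟨η, hη, hB⟩ := stmt19_mvt n F gF hdiff (y i) u 0 1 one_pos hboxB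
    have e3 : (fun j => y i j + 0 * u j) = y i := by funext j; ring
    rw [e3] at hB
    set w : Fin n → ℝ := fun j => y i j + 1 * u j with hwdef
    set zη : Fin n → ℝ := fun j => y i j + η * u j with hzηdef
    have hzηbox : ∀ j, 0 ≤ zη j ∧ zη j ≤ 1 := hboxB η ⟨hη.1.le, hη.2.le⟩
    have hgr : ∀ j, gF zη j ≤ gF (y i) j := by
      refine hDR (y i) zη hzbox hzηbox fun j => ?_
      have : 0 ≤ η * u j := mul_nonneg hη.1.le (hu0 j)
      show y i j ≤ y i j + η * u j
      linarith
    have hBle : F w - F (y i) ≤ ∑ j, gF (y i) j * u j := by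
      have h1 : ∑ j, gF zη j * u j ≤ ∑ j, gF (y i) j * u j :=
        Finset.sum_le_sum fun j _ => mul_le_mul_of_nonneg_right (hgr j) (hu0 j)
      have h2 : F w - F (y i) = (1 - 0) * ∑ j, gF zη j * u j := hB
      rw [h2]; linarith
    have hou : ∑ j, o j * ((1 - y i j) * gF (y i) j) = ∑ j, gF (y i) j * u j :=
      Finset.sum_congr rfl fun j _ => by rw [hudef]; ring
    -- part 6: value of F w
    have hw : (m + (1 - m) * (1 - ε) ^ i) * F o ≤ F w := by
      rcases Nat.eq_zero_or_pos i with hi0 | hipos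
      · subst hi0
        have hwo : w = o := by
          funext j; show y 0 j + 1 * ((1 - y 0 j) * o j) = o j
          rw [hy0]; show (0:ℝ) + 1 * ((1 - 0) * o j) = o j; ring
        rw [hwo]
        have : m + (1 - m) * (1 - ε) ^ (0:ℕ) = 1 := by ring
        rw [this, one_mul]
      · -- i ≥ 1, so K ≥ 2 and (1-ε)^i < 1
        have hK2 : 2 ≤ K := by omega
        have hεhalf : ε ≤ 1 / 2 := by
          rw [hε]
          rw [div_le_div_iff₀ hK0 (by norm_num)]
          have : (2:ℝ) ≤ K := by exact_mod_cast hK2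
          linarith
        have hqpos : (0:ℝ) < 1 - ε := by linarith
        have hqlt : (1 - ε) ^ i < 1 := pow_lt_one₀ hq0 (by linarith) (by omega)
        have hqipos : (0:ℝ) < (1 - ε) ^ i := pow_pos hqpos i
        set a : ℝ := 1 - (1 - ε) ^ i with hadef
        have ha0 : 0 < a := by simp only [hadef]; linarith
        have ha1 : a < 1 := by simp only [hadef]; linarith
        set b : ℝ := 1 / a with hbdef
        have hab : a * b = 1 := mul_one_div_cancel ha0.ne'
        have hb1 : 1 < b := one_lt_one_div ha0 ha1
        set u' : Fin n → ℝ := fun j => y i j * (1 - o j) with hu'def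
        have hu'0 : ∀ j, 0 ≤ u' j := fun j =>
          mul_nonneg (hzbox j).1 (by linarith [(hobox j).2])
        have hya : ∀ j, y i j ≤ a := by
          intro j; have := (hinv i hi.le j).2; simp only [hadef]; linarith
        have hboxC : ∀ r ∈ Set.Icc (0:ℝ) b, ∀ j, 0 ≤ o j + r * u' j ∧ o j + r * u' j ≤ 1 := by
          intro r hr j
          obtain ⟨hr0, hrb⟩ := hr
          have h1 : 0 ≤ r * u' j := mul_nonneg hr0 (hu'0 j)
          have h7 : r * y i j ≤ 1 := by
            calc r * y i j ≤ b * a := mul_le_mul hrb (hya j) (hzbox j).1 (by linarith)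
              _ = 1 := by rw [mul_comm]; exact hab
          have h8 : r * y i j * (1 - o j) ≤ 1 * (1 - o j) :=
            mul_le_mul_of_nonneg_right h7 (by linarith [(hobox j).2])
          constructor
          · linarith [(hobox j).1]
          · show o j + r * (y i j * (1 - o j)) ≤ 1
            nlinarith [h8]
        have hboxC1 : ∀ r ∈ Set.Icc (0:ℝ) 1, ∀ j, 0 ≤ o j + r * u' j ∧ o j + r * u' j ≤ 1 :=
          fun r hr => hboxC r ⟨hr.1, by linarith [hr.2]⟩
        have hboxC2 : ∀ r ∈ Set.Icc (1:ℝ) b, ∀ j, 0 ≤ o j + r * u' j ∧ o j + r * u' j ≤ 1 :=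
          fun r hr => hboxC r ⟨by linarith [hr.1], hr.2⟩
        obtain ⟨σ, hσ, hC1⟩ := stmt19_mvt n F gF hdiff o u' 0 1 one_pos hboxC1
        obtain ⟨τ, hτ, hC2⟩ := stmt19_mvt n F gF hdiff o u' 1 b hb1 hboxC2
        have ew : (fun j => o j + 1 * u' j) = w := by
          funext j; show o j + 1 * (y i j * (1 - o j)) = y i j + 1 * ((1 - y i j) * o j); ring
        have eo : (fun j => o j + 0 * u' j) = o := by funext j; ring
        rw [ew, eo] at hC1
        rw [ew] at hC2
        -- gradient comparison
        have hσbox : ∀ j, 0 ≤ o j + σ * u' j ∧ o j + σ * u' j ≤ 1 :=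
          hboxC σ ⟨hσ.1.le, by linarith [hσ.2]⟩
        have hτbox : ∀ j, 0 ≤ o j + τ * u' j ∧ o j + τ * u' j ≤ 1 :=
          hboxC τ ⟨by linarith [hτ.1], hτ.2.le⟩
        have hgr2 : ∀ j, gF (fun j => o j + τ * u' j) j ≤ gF (fun j => o j + σ * u' j) j := by
          refine hDR (fun j => o j + σ * u' j) (fun j => o j + τ * u' j) hσbox hτbox fun j => ?_
          have hστ : σ ≤ τ := by linarith [hσ.2, hτ.1]
          have := mul_le_mul_of_nonneg_right hστ (hu'0 j)
          show o j + σ * u' j ≤ o j + τ * u' j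
          linarith
        have hSle : ∑ j, gF (fun j => o j + τ * u' j) j * u' j
            ≤ ∑ j, gF (fun j => o j + σ * u' j) j * u' j :=
          Finset.sum_le_sum fun j _ => mul_le_mul_of_nonneg_right (hgr2 j) (hu'0 j)
        -- monotonicity at the far point
        have hmFo : m * F o ≤ F (fun j => o j + b * u' j) := by
          refine hmono o _ (fun j => (hobox j).1) (fun j => ?_) (fun j => (hboxC b ⟨by linarith, le_refl b⟩ j).2)
          have : 0 ≤ b * u' j := mul_nonneg (by linarith) (hu'0 j)
          linarith
        -- assemble
        have hkey : m * F o ≤ F w + (b - 1) * (F w - F o) := by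
          have h1 : F (fun j => o j + b * u' j) - F w
              = (b - 1) * ∑ j, gF (fun j => o j + τ * u' j) j * u' j := hC2
          have h2 : F w - F o = (1 - 0) * ∑ j, gF (fun j => o j + σ * u' j) j * u' j := hC1
          have h3 : (b - 1) * ∑ j, gF (fun j => o j + τ * u' j) j * u' j
              ≤ (b - 1) * ∑ j, gF (fun j => o j + σ * u' j) j * u' j :=
            mul_le_mul_of_nonneg_left hSle (by linarith)
          nlinarith [hmFo]
        have hkey2 := mul_le_mul_of_nonneg_left hkey ha0.le
        have hexp : a * (F w + (b - 1) * (F w - F o))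
            = a * F w + (a * b) * (F w - F o) - a * (F w - F o) := by ring
        rw [hab] at hexp
        have hgoal : m + (1 - m) * (1 - ε) ^ i = 1 - (1 - m) * a := by
          simp only [hadef]; ring
        rw [hgoal]
        nlinarith [hkey2, hexp]
    -- assemble the step inequality
    have hεw : ε * ((m + (1 - m) * (1 - ε) ^ i) * F o) ≤ ε * F w :=
      mul_le_mul_of_nonneg_left hw hε0.le
    have hεB : ε * (F w - F (y i)) ≤ ε * (∑ j, gF (y i) j * u j) :=
      mul_le_mul_of_nonneg_left hBle hε0.le
    have hA' : F (y (i + 1)) - F (y i) = (1 - 0) * ∑ j, gF zξ j * d j := hA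
    have hod : ε * (∑ j, o j * ((1 - y i j) * gF (y i) j)) = ε * ∑ j, gF (y i) j * u j := by
      rw [hou]
    nlinarith [hgd, hA', hεw, hεB, hod]
  -- main induction
  have hmain : ∀ i, i ≤ K →
      ε * (∑ t ∈ Finset.range i, (1 - ε) ^ (i - 1 - t) * (m + (1 - m) * (1 - ε) ^ t)) * F o
        - (i : ℝ) * (ε ^ 2 * L * D ^ 2) ≤ F (y i) := by
    intro i
    induction i with
    | zero => intro _; simp; exact hnn _ (hbox 0 (by omega))
    | succ i ih =>
      intro hi1
      have hi : i < K := by omega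
      have ih' := ih (by omega)
      have hS : (∑ t ∈ Finset.range (i + 1), (1 - ε) ^ (i + 1 - 1 - t) * (m + (1 - m) * (1 - ε) ^ t))
          = (1 - ε) * (∑ t ∈ Finset.range i, (1 - ε) ^ (i - 1 - t) * (m + (1 - m) * (1 - ε) ^ t))
            + (m + (1 - m) * (1 - ε) ^ i) := by
        rw [Finset.sum_range_succ, Finset.mul_sum]
        have h1 : i + 1 - 1 - i = 0 := by omega
        rw [h1, pow_zero, one_mul]
        congr 1
        refine Finset.sum_congr rfl fun t ht => ?_
        have ht' : t < i := Finset.mem_range.mp ht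
        have h2 : i + 1 - 1 - t = (i - 1 - t) + 1 := by omega
        rw [h2, pow_succ]; ring
      have hstep' := hstepineq i hi
      have hmul := mul_le_mul_of_nonneg_left ih' hq0
      have hLD0 : (0:ℝ) ≤ ε ^ 2 * L * D ^ 2 := by positivity
      have hconst : (1 - ε) * ((i:ℝ) * (ε ^ 2 * L * D ^ 2)) ≤ (i:ℝ) * (ε ^ 2 * L * D ^ 2) := by
        nlinarith [mul_nonneg (mul_nonneg hε0.le (Nat.cast_nonneg (α := ℝ) i)) hLD0]
      have hgoal : ε * (∑ t ∈ Finset.range (i + 1), (1 - ε) ^ (i + 1 - 1 - t) * (m + (1 - m) * (1 - ε) ^ t)) * F o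
          = (1 - ε) * (ε * (∑ t ∈ Finset.range i, (1 - ε) ^ (i - 1 - t) * (m + (1 - m) * (1 - ε) ^ t)) * F o)
            + ε * ((m + (1 - m) * (1 - ε) ^ i) * F o) := by
        rw [hS]; ring
      rw [hgoal]
      push_cast
      push_cast at hmul hconst
      linarith [hstep', hmul, hconst]
  -- endgame
  have hfin := hmain K le_rfl
  have hKe : (K : ℝ) * (ε ^ 2 * L * D ^ 2) = ε * L * D ^ 2 := by
    have hKne : (K:ℝ) ≠ 0 := hK0.ne'
    rw [hε]; field_simp
  -- compute the sum
  have hgeom : ε * (∑ t ∈ Finset.range K, (1 - ε) ^ t) = 1 - (1 - ε) ^ K := by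
    have := geom_sum_mul (1 - ε) K
    linear_combination -this
  have hSsum : (∑ t ∈ Finset.range K, (1 - ε) ^ (K - 1 - t) * (m + (1 - m) * (1 - ε) ^ t))
      = m * (∑ t ∈ Finset.range K, (1 - ε) ^ t) + (1 - m) * (K : ℝ) * (1 - ε) ^ (K - 1) := by
    have hsplit : ∀ t ∈ Finset.range K,
        (1 - ε) ^ (K - 1 - t) * (m + (1 - m) * (1 - ε) ^ t)
          = m * (1 - ε) ^ (K - 1 - t) + (1 - m) * (1 - ε) ^ (K - 1) := by
      intro t ht
      have ht' : t < K := Finset.mem_range.mp ht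
      have h1 : (K - 1 - t) + t = K - 1 := by omega
      have h2 : (1 - ε) ^ (K - 1 - t) * (1 - ε) ^ t = (1 - ε) ^ (K - 1) := by
        rw [← pow_add, h1]
      nlinarith [h2]
    rw [Finset.sum_congr rfl hsplit, Finset.sum_add_distrib, ← Finset.mul_sum,
      Finset.sum_const, Finset.card_range,
      Finset.sum_range_reflect (fun t => (1 - ε) ^ t) K]
    push_cast; ring
  have hrefl : (∑ t ∈ Finset.range K, (1 - ε) ^ (K - 1 - t)) = ∑ t ∈ Finset.range K, (1 - ε) ^ t :=
    Finset.sum_range_reflect (fun t => (1 - ε) ^ t) K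
  -- exp bounds
  have he1 : (1:ℝ) < Real.exp 1 := by
    have := Real.add_one_le_exp (1:ℝ)
    linarith
  have hqK : (1 - ε) ^ K ≤ 1 / Real.exp 1 := by
    have h1 : 1 - ε ≤ Real.exp (-ε) := by
      have := Real.add_one_le_exp (-ε)
      linarith
    have h2 : (1 - ε) ^ K ≤ Real.exp (-ε) ^ K := pow_le_pow_left₀ hq0 h1 K
    have h3 : Real.exp (-ε) ^ K = Real.exp (-(ε * K)) := by
      rw [← Real.exp_nat_mul]; congr 1; ring
    rw [h3, hεK, Real.exp_neg] at h2
    rw [one_div]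
    exact h2
  have hqK1 : 1 / Real.exp 1 ≤ (1 - ε) ^ (K - 1) := by
    rcases Nat.eq_or_lt_of_le hK with h | hK2
    · rw [← h]
      norm_num
      rw [inv_le_one_iff₀]
      right; linarith
    · have hK2' : 2 ≤ K := hK2
      have hKm1 : (0:ℝ) < (K:ℝ) - 1 := by
        have : (2:ℝ) ≤ K := by exact_mod_cast hK2'
        linarith
      set r : ℝ := 1 / ((K:ℝ) - 1) with hrdef
      have hr0 : 0 < r := by positivity
      have h1 : (1 + r) ^ (K - 1) ≤ Real.exp 1 := by
        have ha : 1 + r ≤ Real.exp r := by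
          have := Real.add_one_le_exp r
          linarith
        have hb : (1 + r) ^ (K - 1) ≤ Real.exp r ^ (K - 1) :=
          pow_le_pow_left₀ (by linarith) ha (K - 1)
        have hc : Real.exp r ^ (K - 1) = Real.exp (r * ((K:ℝ) - 1)) := by
          rw [← Real.exp_nat_mul]
          congr 1
          have : ((K - 1 : ℕ) : ℝ) = (K:ℝ) - 1 := by
            push_cast [Nat.cast_sub hK]; ring
          rw [this]; ring
        have hd : r * ((K:ℝ) - 1) = 1 := by
          rw [hrdef]; field_simp
        rw [hc, hd] at hb
        exact hb
      have h2 : (1 - ε) * (1 + r) = 1 := by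
        rw [hε, hrdef]
        field_simp
        ring
      have h3 : (1 - ε) ^ (K - 1) * (1 + r) ^ (K - 1) = 1 := by
        rw [← mul_pow, h2, one_pow]
      have hq0K : (0:ℝ) ≤ (1 - ε) ^ (K - 1) := by positivity
      rw [div_le_iff₀ (by positivity : (0:ℝ) < Real.exp 1)]
      calc (1:ℝ) = (1 - ε) ^ (K - 1) * (1 + r) ^ (K - 1) := h3.symm
        _ ≤ (1 - ε) ^ (K - 1) * Real.exp 1 := mul_le_mul_of_nonneg_left h1 hq0K
  -- put everything together
  have hval : ε * (∑ t ∈ Finset.range K, (1 - ε) ^ (K - 1 - t) * (m + (1 - m) * (1 - ε) ^ t)) * F o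
      = (m * (1 - (1 - ε) ^ K) + (1 - m) * (1 - ε) ^ (K - 1)) * F o := by
    rw [hSsum]
    have : ε * (m * (∑ t ∈ Finset.range K, (1 - ε) ^ t) + (1 - m) * (K:ℝ) * (1 - ε) ^ (K - 1))
        = m * (ε * (∑ t ∈ Finset.range K, (1 - ε) ^ t)) + (1 - m) * (ε * K) * (1 - ε) ^ (K - 1) := by
      ring
    rw [this, hgeom, hεK]
    ring
  rw [hval, hKe] at hfin
  have hcomp : (m * (1 - 1 / Real.exp 1) + (1 - m) * (1 / Real.exp 1)) * F o
      ≤ (m * (1 - (1 - ε) ^ K) + (1 - m) * (1 - ε) ^ (K - 1)) * F o := by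
    have h1 : 0 ≤ m * (1 / Real.exp 1 - (1 - ε) ^ K) * F o :=
      mul_nonneg (mul_nonneg hm0 (by linarith)) hFo0
    have h2 : 0 ≤ (1 - m) * ((1 - ε) ^ (K - 1) - 1 / Real.exp 1) * F o :=
      mul_nonneg (mul_nonneg (by linarith) (by linarith)) hFo0
    nlinarith [h1, h2]
  linarith
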